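/- arXiv:2107.00957 — 2 statements merged into one kernel-verified Lean document; each statement's English description precedes it below -/
import Mathlib

section
/- Let y be a fractional cache state and assume k ≥ 1 (so K ≥ 2). For each l ∈ {1,…,N} let l* = π^{−1}(l) be the position of l under π, and let i*(l) = max{ i ∈ {1,…,K−1} : ∑_{j=1}^{i} y_{π_j} ≤ k and l+N ∉ {π_1,…,π_i} } (this set is nonempty since i = 1 belongs to it). Define g ∈ ℝ^N by g_l = ( c(π_{i*(l)+1}) − c(l) ) · 𝟙{ l* ≤ i*(l) }. Then g is a supergradient of the caching gain at y, regarded as a concave function of the first N coordinates with y_{l+N} = 1 − y_l substituted: for every fractional cache state y', G(y') ≤ G(y) + ∑_{l=1}^{N} g_l · (y'_l − y_l). -/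
namespace ACAI

/-- `sigma N π i` = number of indices `j ∈ {1,…,i}` with `π j > N`, i.e. the number of
objects among the `i` cheapest that are served from the server. -/
def sigma (N : ℕ) (π : ℕ → ℕ) (i : ℕ) : ℕ :=
  ((Finset.Icc 1 i).filter (fun j => N < π j)).card

/-- `Kmin N k π` = least index `i` with `sigma N π i = k`. -/
noncomputable def Kmin (N k : ℕ) (π : ℕ → ℕ) : ℕ :=
  sInf {i | sigma N π i = k}

/-- `alpha c π i = c (π (i+1)) - c (π i)`. -/
noncomputable def alpha (c : ℕ → ℝ) (π : ℕ → ℕ) (i : ℕ) : ℝ :=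
  c (π (i + 1)) - c (π i)

/-- A fractional cache state: `y ∈ [0,1]^{2N}` with `∑_{i=1}^{N} y i = h` and
`y (i+N) = 1 - y i` for `i ∈ {1,…,N}`. -/
def IsFrac (N h : ℕ) (y : ℕ → ℝ) : Prop :=
  (∀ i ∈ Finset.Icc 1 (2 * N), y i ∈ Set.Icc (0 : ℝ) 1) ∧
  (∑ i ∈ Finset.Icc 1 N, y i = (h : ℝ)) ∧
  (∀ i ∈ Finset.Icc 1 N, y (i + N) = 1 - y i)

/-- An integral cache state: a fractional cache state with `{0,1}` coordinates. -/
def IsInt (N h : ℕ) (y : ℕ → ℝ) : Prop :=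
  IsFrac N h y ∧ ∀ i ∈ Finset.Icc 1 (2 * N), y i = 0 ∨ y i = 1

/-- A request over the augmented catalog `U = {1,…,2N}`: nonnegative costs `c` with
`c (i+N) = c i + cf` for catalog objects `i ∈ {1,…,N}`, and a bijection `π` of
`{1,…,2N}` sorting the costs nondecreasingly and placing each `i ∈ {1,…,N}` before
`i + N`. -/
def Request (N : ℕ) (cf : ℝ) (c : ℕ → ℝ) (π : ℕ → ℕ) : Prop :=
  (∀ i ∈ Finset.Icc 1 (2 * N), 0 ≤ c i) ∧
  (∀ i ∈ Finset.Icc 1 N, c (i + N) = c i + cf) ∧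
  Set.BijOn π (Set.Icc 1 (2 * N)) (Set.Icc 1 (2 * N)) ∧
  (∀ i, 1 ≤ i → i < 2 * N → c (π i) ≤ c (π (i + 1))) ∧
  (∀ j l, j ∈ Set.Icc 1 (2 * N) → l ∈ Set.Icc 1 (2 * N) →
    π j ≤ N → π l = π j + N → j < l)

/-- The caching gain
`G(y) = ∑_{i=1}^{K-1} α_i · min { k - σ_i, (∑_{j=1}^{i} y_{π j}) - σ_i }`. -/
noncomputable def gain (N k : ℕ) (c : ℕ → ℝ) (π : ℕ → ℕ) (y : ℕ → ℝ) : ℝ :=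
  ∑ i ∈ Finset.Icc 1 (Kmin N k π - 1),
    alpha c π i *
      min ((k : ℝ) - sigma N π i) ((∑ j ∈ Finset.Icc 1 i, y (π j)) - sigma N π i)

open Classical in
/-- `Iset N π i = { j ∈ {1,…,i} : π j ≤ N and π j + N ∉ {π 1, …, π i} }`. -/
noncomputable def Iset (N : ℕ) (π : ℕ → ℕ) (i : ℕ) : Finset ℕ :=
  (Finset.Icc 1 i).filter (fun j => π j ≤ N ∧ ∀ l ∈ Finset.Icc 1 i, π l ≠ π j + N)

/-- The auxiliary (multilinear) gain
`L(y) = ∑_{i=1}^{K-1} α_i (k - σ_i) (1 - ∏_{j ∈ I_i} (1 - y_{π j}/(k - σ_i)))`. -/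
noncomputable def aux (N k : ℕ) (c : ℕ → ℝ) (π : ℕ → ℕ) (y : ℕ → ℝ) : ℝ :=
  ∑ i ∈ Finset.Icc 1 (Kmin N k π - 1),
    alpha c π i * ((k : ℝ) - sigma N π i) *
      (1 - ∏ j ∈ Iset N π i, (1 - y (π j) / ((k : ℝ) - sigma N π i)))

/-- `istar N k π y l` = largest `i ∈ {1,…,K-1}` such that `∑_{j=1}^{i} y_{π j} ≤ k`
and `l + N ∉ {π 1, …, π i}`. -/
noncomputable def istar (N k : ℕ) (π : ℕ → ℕ) (y : ℕ → ℝ) (l : ℕ) : ℕ :=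
  sSup {i | i ∈ Finset.Icc 1 (Kmin N k π - 1) ∧
    (∑ j ∈ Finset.Icc 1 i, y (π j)) ≤ (k : ℝ) ∧
    ∀ v ∈ Finset.Icc 1 i, π v ≠ l + N}

/-- The supergradient vector: `g l = (c (π (i*(l)+1)) - c l) · 𝟙{l* ≤ i*(l)}`, where
`l* = π⁻¹ l` is given by the function `lstar`. -/
noncomputable def superg (N k : ℕ) (c : ℕ → ℝ) (π : ℕ → ℕ) (y : ℕ → ℝ)
    (lstar : ℕ → ℕ) (l : ℕ) : ℝ :=
  if lstar l ≤ istar N k π y l then c (π (istar N k π y l + 1)) - c l else 0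


noncomputable def Ssum (π : ℕ → ℕ) (z : ℕ → ℝ) (i : ℕ) : ℝ :=
  ∑ j ∈ Finset.Icc 1 i, z (π j)

lemma sum_alpha (c : ℕ → ℝ) (π : ℕ → ℕ) (a b : ℕ) (hab : a ≤ b) :
    ∑ i ∈ Finset.Icc a b, alpha c π i = c (π (b + 1)) - c (π a) := by
  induction b, hab using Nat.le_induction with
  | base => simp [alpha]
  | succ n hn ih =>
      rw [Finset.sum_Icc_succ_top (by omega), ih]
      simp [alpha]

lemma sigma_succ' (N : ℕ) (π : ℕ → ℕ) (m : ℕ) :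
    sigma N π (m + 1) = sigma N π m + (if N < π (m + 1) then 1 else 0) := by
  unfold sigma
  rw [← Finset.insert_Icc_right_eq_Icc_add_one (by omega : 1 ≤ m + 1), Finset.filter_insert]
  split
  · rw [Finset.card_insert_of_notMem (by simp)]
  · simp

lemma sigma_twoN (N : ℕ) (π : ℕ → ℕ)
    (hbij : Set.BijOn π (Set.Icc 1 (2 * N)) (Set.Icc 1 (2 * N))) :
    sigma N π (2 * N) = N := by
  have : sigma N π (2 * N) = (Finset.Icc (N + 1) (2 * N)).card := by
    apply Finset.card_nbij (i := π)
    · intro a ha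
      simp only [Finset.coe_filter, Set.mem_setOf_eq, Finset.coe_Icc, Set.mem_Icc, Finset.mem_filter, Finset.mem_Icc] at ha ⊢
      have := hbij.mapsTo (Set.mem_Icc.mpr ⟨ha.1.1, ha.1.2⟩)
      rw [Set.mem_Icc] at this
      omega
    · intro a ha b hb hab
      simp only [Finset.coe_filter, Set.mem_setOf_eq, Finset.mem_Icc] at ha hb
      exact hbij.injOn (Set.mem_Icc.mpr ⟨ha.1.1, ha.1.2⟩) (Set.mem_Icc.mpr ⟨hb.1.1, hb.1.2⟩) hab
    · intro m hm
      simp only [Finset.coe_Icc, Set.mem_Icc] at hm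
      obtain ⟨j, hj, hπj⟩ := hbij.surjOn (Set.mem_Icc.mpr ⟨by omega, hm.2⟩)
      rw [Set.mem_Icc] at hj
      refine ⟨j, ?_, hπj⟩
      simp only [Finset.coe_filter, Set.mem_setOf_eq, Finset.mem_Icc]
      exact ⟨⟨hj.1, hj.2⟩, by omega⟩
  rw [this, Nat.card_Icc]
  omega

lemma exists_sigma_eq (N k : ℕ) (π : ℕ → ℕ) (hk : 0 < k) (hkN : k ≤ N)
    (hbij : Set.BijOn π (Set.Icc 1 (2 * N)) (Set.Icc 1 (2 * N))) :
    ∃ i, i ≤ 2 * N ∧ sigma N π i = k := by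
  have h2N : k ≤ sigma N π (2 * N) := by rw [sigma_twoN N π hbij]; exact hkN
  set T := {i | k ≤ sigma N π i} with hT
  have hTne : (2 * N) ∈ T := h2N
  set m := sInf T with hm
  have hmem : m ∈ T := Nat.sInf_mem ⟨_, hTne⟩
  have hmle : m ≤ 2 * N := Nat.sInf_le hTne
  have hm1 : 1 ≤ m := by
    rcases Nat.eq_zero_or_pos m with h0 | h1
    · exfalso; rw [h0] at hmem
      simp only [hT, Set.mem_setOf_eq, sigma] at hmem
      simp at hmem; omega
    · exact h1
  have hprev : ¬ (m - 1 ∈ T) := Nat.notMem_of_lt_sInf (by omega)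
  simp only [hT, Set.mem_setOf_eq, not_le] at hprev hmem
  have hstep := sigma_succ' N π (m - 1)
  rw [show m - 1 + 1 = m by omega] at hstep
  refine ⟨m, hmle, ?_⟩
  split at hstep <;> omega

lemma gain_eq (N k : ℕ) (c : ℕ → ℝ) (π : ℕ → ℕ) (z : ℕ → ℝ) :
    gain N k c π z = ∑ i ∈ Finset.Icc 1 (Kmin N k π - 1),
      alpha c π i * min ((k : ℝ) - sigma N π i) (Ssum π z i - sigma N π i) := rfl

lemma istar_eq (N k : ℕ) (π : ℕ → ℕ) (y : ℕ → ℝ) (l : ℕ) :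
    istar N k π y l = sSup {i | i ∈ Finset.Icc 1 (Kmin N k π - 1) ∧
      Ssum π y i ≤ (k : ℝ) ∧ ∀ v ∈ Finset.Icc 1 i, π v ≠ l + N} := rfl

/-- **Supergradient of the caching gain (Theorem 5).**
The vector `g` with components `g l = (c (π (i*(l)+1)) - c l) · 𝟙{l* ≤ i*(l)}` is a
supergradient of the caching gain at `y`: for every fractional cache state `y'`,
`G(y') ≤ G(y) + ∑_{l=1}^{N} g l · (y' l - y l)`. -/
theorem superg_is_supergradient
    (N k h : ℕ) (hN : 0 < N) (hk : 0 < k) (hkh : k ≤ h) (hhN : h ≤ N)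
    (cf : ℝ) (hcf : 0 < cf) (c : ℕ → ℝ) (π : ℕ → ℕ)
    (hreq : Request N cf c π)
    (y : ℕ → ℝ) (hy : IsFrac N h y)
    (lstar : ℕ → ℕ)
    (hlstar : ∀ l ∈ Finset.Icc 1 (2 * N),
      lstar l ∈ Finset.Icc 1 (2 * N) ∧ π (lstar l) = l) :
    ∀ y', IsFrac N h y' →
      gain N k c π y' ≤ gain N k c π y +
        ∑ l ∈ Finset.Icc 1 N, superg N k c π y lstar l * (y' l - y l) := by
  intro y' hy'
  obtain ⟨hc0, hcadd, hbij, hmono, hprec⟩ := hreq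
  obtain ⟨hyb, hysum, hyc⟩ := hy
  obtain ⟨hyb', hysum', hyc'⟩ := hy'
  -- basic range facts
  have hπrange : ∀ j, 1 ≤ j → j ≤ 2 * N → 1 ≤ π j ∧ π j ≤ 2 * N := by
    intro j h1 h2
    exact Set.mem_Icc.mp (hbij.mapsTo (Set.mem_Icc.mpr ⟨h1, h2⟩))
  have hlstar' : ∀ m, 1 ≤ m → m ≤ 2 * N →
      (1 ≤ lstar m ∧ lstar m ≤ 2 * N) ∧ π (lstar m) = m := by
    intro m h1 h2
    have := hlstar m (Finset.mem_Icc.mpr ⟨h1, h2⟩)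
    exact ⟨Finset.mem_Icc.mp this.1, this.2⟩
  have hπ1 : π 1 ≤ N := by
    by_contra hgt
    push_neg at hgt
    have hr := hπrange 1 le_rfl (by omega)
    obtain ⟨⟨ha, hb⟩, hπl⟩ := hlstar' (π 1 - N) (by omega) (by omega)
    have := hprec (lstar (π 1 - N)) 1 (Set.mem_Icc.mpr ⟨ha, hb⟩)
      (Set.mem_Icc.mpr ⟨le_rfl, by omega⟩) (by rw [hπl]; omega) (by rw [hπl]; omega)
    omega
  have hσK : sigma N π (Kmin N k π) = k ∧ Kmin N k π ≤ 2 * N := by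
    obtain ⟨i0, hi0le, hi0⟩ := exists_sigma_eq N k π hk (le_trans hkh hhN) hbij
    have hi0' : i0 ∈ {i | sigma N π i = k} := hi0
    exact ⟨Nat.sInf_mem (Set.nonempty_of_mem hi0'), le_trans (Nat.sInf_le hi0') hi0le⟩
  have hK2 : 2 ≤ Kmin N k π := by
    by_contra hlt
    push_neg at hlt
    have hσ1 : sigma N π 1 = 0 := by
      unfold sigma
      rw [Finset.Icc_self, Finset.filter_singleton, if_neg (by omega)]
      exact Finset.card_empty
    have h01 : Kmin N k π = 0 ∨ Kmin N k π = 1 := by omega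
    rcases h01 with h | h <;> rw [h] at hσK
    · have : sigma N π 0 = 0 := by simp [sigma]
      omega
    · omega
  have hy01 : ∀ m, 1 ≤ m → m ≤ 2 * N → 0 ≤ y m ∧ y m ≤ 1 := by
    intro m h1 h2
    exact Set.mem_Icc.mp (hyb m (Finset.mem_Icc.mpr ⟨h1, h2⟩))
  have hSmono : ∀ a b, a ≤ b → b ≤ 2 * N → Ssum π y a ≤ Ssum π y b := by
    intro a b hab hb
    apply Finset.sum_le_sum_of_subset_of_nonneg (Finset.Icc_subset_Icc_right hab)
    intro j hj _
    rw [Finset.mem_Icc] at hj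
    exact (hy01 _ (hπrange j hj.1 (by omega)).1 (hπrange j hj.1 (by omega)).2).1
  have hmemiff : ∀ i, i ≤ 2 * N → ∀ m, 1 ≤ m → m ≤ 2 * N →
      ((∃ j ∈ Finset.Icc 1 i, π j = m) ↔ lstar m ≤ i) := by
    intro i hi m h1 h2
    constructor
    · rintro ⟨j, hj, hπj⟩
      rw [Finset.mem_Icc] at hj
      obtain ⟨⟨ha, hb⟩, hπl⟩ := hlstar' m h1 h2
      have : j = lstar m := hbij.injOn (Set.mem_Icc.mpr ⟨hj.1, by omega⟩)
        (Set.mem_Icc.mpr ⟨ha, hb⟩) (by rw [hπj, hπl])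
      omega
    · intro hle
      obtain ⟨⟨ha, _⟩, hπl⟩ := hlstar' m h1 h2
      exact ⟨lstar m, Finset.mem_Icc.mpr ⟨ha, hle⟩, hπl⟩
  have hlstarlt : ∀ l, 1 ≤ l → l ≤ N → lstar l < lstar (l + N) := by
    intro l h1 h2
    obtain ⟨⟨ha, hb⟩, hπl⟩ := hlstar' l h1 (by omega)
    obtain ⟨⟨ha', hb'⟩, hπl'⟩ := hlstar' (l + N) (by omega) (by omega)
    exact hprec _ _ (Set.mem_Icc.mpr ⟨ha, hb⟩) (Set.mem_Icc.mpr ⟨ha', hb'⟩)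
      (by rw [hπl]; omega) (by rw [hπl, hπl'])
  -- analysis of istar
  have histar : ∀ l, 1 ≤ l → l ≤ N →
      (1 ≤ istar N k π y l ∧ istar N k π y l ≤ Kmin N k π - 1) ∧
      (∀ i ∈ Finset.Icc 1 (Kmin N k π - 1),
        ((Ssum π y i ≤ (k : ℝ) ∧ i < lstar (l + N)) ↔ i ≤ istar N k π y l)) := by
    intro l h1 h2
    have hcond : ∀ i, i ≤ 2 * N →
        ((∀ v ∈ Finset.Icc 1 i, π v ≠ l + N) ↔ i < lstar (l + N)) := by
      intro i hi
      constructor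
      · intro hv
        by_contra hle
        push_neg at hle
        obtain ⟨j, hj, hπj⟩ := (hmemiff i hi (l + N) (by omega) (by omega)).mpr (by omega)
        exact hv j hj hπj
      · intro hlt v hv hπv
        have := (hmemiff i hi (l + N) (by omega) (by omega)).mp ⟨v, hv, hπv⟩
        omega
    set T := {i | i ∈ Finset.Icc 1 (Kmin N k π - 1) ∧
      Ssum π y i ≤ (k : ℝ) ∧ ∀ v ∈ Finset.Icc 1 i, π v ≠ l + N} with hTdef
    have histeq : istar N k π y l = sSup T := istar_eq N k π y l
    have hT1 : (1 : ℕ) ∈ T := by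
      refine ⟨Finset.mem_Icc.mpr ⟨le_rfl, by omega⟩, ?_, ?_⟩
      · have hs1 : Ssum π y 1 = y (π 1) := by simp [Ssum]
        rw [hs1]
        have hbd := hy01 (π 1) (hπrange 1 le_rfl (by omega)).1 (hπrange 1 le_rfl (by omega)).2
        have hk1 : (1 : ℝ) ≤ k := by exact_mod_cast hk
        linarith [hbd.2]
      · intro v hv hπv
        rw [Finset.mem_Icc] at hv
        have hv1 : v = 1 := by omega
        rw [hv1] at hπv
        omega
    have hTbdd : BddAbove T := ⟨Kmin N k π - 1, fun i hi => (Finset.mem_Icc.mp hi.1).2⟩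
    have hsmem : sSup T ∈ T := Nat.sSup_mem ⟨1, hT1⟩ hTbdd
    have hub : ∀ i ∈ T, i ≤ sSup T := fun i hi => le_csSup hTbdd hi
    obtain ⟨hsA, hsS, hsV⟩ := hsmem
    rw [Finset.mem_Icc] at hsA
    have hslt : sSup T < lstar (l + N) := (hcond _ (by omega)).mp hsV
    rw [histeq]
    refine ⟨⟨hsA.1, hsA.2⟩, ?_⟩
    intro i hi
    rw [Finset.mem_Icc] at hi
    constructor
    · rintro ⟨hS, hlt⟩
      exact hub i ⟨Finset.mem_Icc.mpr hi, hS, (hcond i (by omega)).mpr hlt⟩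
    · intro hle
      exact ⟨le_trans (hSmono i (sSup T) hle (by omega)) hsS, by omega⟩
  -- key identity: row sums give superg
  have hD : ∀ l, 1 ≤ l → l ≤ N →
      ∑ i ∈ Finset.Icc 1 (Kmin N k π - 1), alpha c π i *
        (if lstar l ≤ i ∧ Ssum π y i ≤ (k : ℝ) ∧ i < lstar (l + N) then (1 : ℝ) else 0)
      = superg N k c π y lstar l := by
    intro l h1 h2
    obtain ⟨⟨hi1, hi2⟩, hchar⟩ := histar l h1 h2
    have hls1 : 1 ≤ lstar l := ((hlstar' l h1 (by omega)).1).1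
    have step1 : ∑ i ∈ Finset.Icc 1 (Kmin N k π - 1), alpha c π i *
        (if lstar l ≤ i ∧ Ssum π y i ≤ (k : ℝ) ∧ i < lstar (l + N) then (1 : ℝ) else 0)
        = ∑ i ∈ Finset.Icc 1 (Kmin N k π - 1),
            (if lstar l ≤ i ∧ i ≤ istar N k π y l then alpha c π i else 0) := by
      apply Finset.sum_congr rfl
      intro i hi
      by_cases hcase : lstar l ≤ i ∧ Ssum π y i ≤ (k : ℝ) ∧ i < lstar (l + N)
      · rw [if_pos hcase, mul_one,
          if_pos ⟨hcase.1, (hchar i hi).mp ⟨hcase.2.1, hcase.2.2⟩⟩]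
      · rw [if_neg hcase, mul_zero, if_neg ?_]
        rintro ⟨ha, hb⟩
        exact hcase ⟨ha, ((hchar i hi).mpr hb).1, ((hchar i hi).mpr hb).2⟩
    rw [step1, ← Finset.sum_filter]
    have hfilt : (Finset.Icc 1 (Kmin N k π - 1)).filter
        (fun i => lstar l ≤ i ∧ i ≤ istar N k π y l)
        = Finset.Icc (lstar l) (istar N k π y l) := by
      ext i
      simp only [Finset.mem_filter, Finset.mem_Icc]
      omega
    rw [hfilt]
    by_cases hll : lstar l ≤ istar N k π y l
    · rw [sum_alpha c π _ _ hll, (hlstar' l h1 (by omega)).2]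
      simp only [superg]
      rw [if_pos hll]
    · rw [Finset.Icc_eq_empty (by omega), Finset.sum_empty]
      simp only [superg]
      rw [if_neg hll]
  -- column sums give the linearized increments
  have hC : ∀ i ∈ Finset.Icc 1 (Kmin N k π - 1),
      ∑ l ∈ Finset.Icc 1 N,
        (if lstar l ≤ i ∧ Ssum π y i ≤ (k : ℝ) ∧ i < lstar (l + N) then (1 : ℝ) else 0)
          * (y' l - y l)
      = (if Ssum π y i ≤ (k : ℝ) then Ssum π y' i - Ssum π y i else 0) := by
    intro i hi
    rw [Finset.mem_Icc] at hi
    have hi2N : i ≤ 2 * N := by omega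
    by_cases hS : Ssum π y i ≤ (k : ℝ)
    · rw [if_pos hS]
      have hsplit : ∀ l ∈ Finset.Icc 1 N,
          (if lstar l ≤ i ∧ Ssum π y i ≤ (k : ℝ) ∧ i < lstar (l + N) then (1 : ℝ) else 0)
            * (y' l - y l)
          = (if lstar l ≤ i then (1 : ℝ) else 0) * (y' l - y l)
            - (if lstar (l + N) ≤ i then (1 : ℝ) else 0) * (y' l - y l) := by
        intro l hl
        rw [Finset.mem_Icc] at hl
        by_cases hb : lstar (l + N) ≤ i
        · have hlt := hlstarlt l hl.1 hl.2
          rw [if_neg (fun hcontra => absurd hcontra.2.2 (not_lt.mpr hb)),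
            if_pos (by omega), if_pos hb]
          ring
        · by_cases hc : lstar l ≤ i
          · rw [if_pos ⟨hc, hS, by omega⟩, if_pos hc, if_neg hb]
            ring
          · rw [if_neg (fun hcontra => hc hcontra.1), if_neg hc, if_neg hb]
            ring
      rw [Finset.sum_congr rfl hsplit, Finset.sum_sub_distrib]
      have e1 : ∀ (z : ℕ → ℝ), ∑ l ∈ Finset.Icc 1 N,
          (if lstar l ≤ i then (1 : ℝ) else 0) * z l
          = ∑ j ∈ (Finset.Icc 1 i).filter (fun j => π j ≤ N), z (π j) := by
        intro z
        simp only [ite_mul, one_mul, zero_mul]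
        rw [← Finset.sum_filter]
        apply Finset.sum_nbij' (i := fun l => lstar l) (j := fun j => π j)
        · intro a ha
          simp only [Finset.mem_filter, Finset.mem_Icc] at ha ⊢
          obtain ⟨⟨h1', h2'⟩, hπl⟩ := hlstar' a ha.1.1 (by omega)
          exact ⟨⟨h1', ha.2⟩, by rw [hπl]; exact ha.1.2⟩
        · intro a ha
          simp only [Finset.mem_filter, Finset.mem_Icc] at ha ⊢
          have hr := hπrange a ha.1.1 (by omega)
          refine ⟨⟨hr.1, ha.2⟩, ?_⟩
          have : lstar (π a) = a := by
            obtain ⟨⟨h1', h2'⟩, hπl⟩ := hlstar' (π a) hr.1 (by omega)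
            exact hbij.injOn (Set.mem_Icc.mpr ⟨h1', h2'⟩)
              (Set.mem_Icc.mpr ⟨ha.1.1, by omega⟩) hπl
          rw [this]; exact ha.1.2
        · intro a ha
          simp only [Finset.mem_filter, Finset.mem_Icc] at ha
          exact (hlstar' a ha.1.1 (by omega)).2
        · intro a ha
          simp only [Finset.mem_filter, Finset.mem_Icc] at ha
          have hr := hπrange a ha.1.1 (by omega)
          obtain ⟨⟨h1', h2'⟩, hπl⟩ := hlstar' (π a) hr.1 (by omega)
          exact hbij.injOn (Set.mem_Icc.mpr ⟨h1', h2'⟩)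
            (Set.mem_Icc.mpr ⟨ha.1.1, by omega⟩) hπl
        · intro a ha
          simp only [Finset.mem_filter, Finset.mem_Icc] at ha
          rw [(hlstar' a ha.1.1 (by omega)).2]
      have e2 : ∀ (z : ℕ → ℝ), ∑ l ∈ Finset.Icc 1 N,
          (if lstar (l + N) ≤ i then (1 : ℝ) else 0) * z l
          = ∑ j ∈ (Finset.Icc 1 i).filter (fun j => N < π j), z (π j - N) := by
        intro z
        simp only [ite_mul, one_mul, zero_mul]
        rw [← Finset.sum_filter]
        apply Finset.sum_nbij' (i := fun l => lstar (l + N)) (j := fun j => π j - N)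
        · intro a ha
          simp only [Finset.mem_filter, Finset.mem_Icc] at ha ⊢
          obtain ⟨⟨h1', h2'⟩, hπl⟩ := hlstar' (a + N) (by omega) (by omega)
          exact ⟨⟨h1', ha.2⟩, by rw [hπl]; omega⟩
        · intro a ha
          simp only [Finset.mem_filter, Finset.mem_Icc] at ha ⊢
          have hr := hπrange a ha.1.1 (by omega)
          refine ⟨⟨by omega, by omega⟩, ?_⟩
          have heq : π a - N + N = π a := by omega
          have : lstar (π a) = a := by
            obtain ⟨⟨h1', h2'⟩, hπl⟩ := hlstar' (π a) hr.1 (by omega)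
            exact hbij.injOn (Set.mem_Icc.mpr ⟨h1', h2'⟩)
              (Set.mem_Icc.mpr ⟨ha.1.1, by omega⟩) hπl
          rw [heq, this]; exact ha.1.2
        · intro a ha
          simp only [Finset.mem_filter, Finset.mem_Icc] at ha
          rw [(hlstar' (a + N) (by omega) (by omega)).2]
          omega
        · intro a ha
          simp only [Finset.mem_filter, Finset.mem_Icc] at ha
          have hr := hπrange a ha.1.1 (by omega)
          have heq : π a - N + N = π a := by omega
          rw [heq]
          obtain ⟨⟨h1', h2'⟩, hπl⟩ := hlstar' (π a) hr.1 (by omega)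
          exact hbij.injOn (Set.mem_Icc.mpr ⟨h1', h2'⟩)
            (Set.mem_Icc.mpr ⟨ha.1.1, by omega⟩) hπl
        · intro a ha
          simp only [Finset.mem_filter, Finset.mem_Icc] at ha
          rw [(hlstar' (a + N) (by omega) (by omega)).2]
          congr 1
          omega
      rw [e1 (fun l => y' l - y l), e2 (fun l => y' l - y l)]
      have e3 : ∑ j ∈ (Finset.Icc 1 i).filter (fun j => N < π j),
          (fun l => y' l - y l) (π j - N)
          = - ∑ j ∈ (Finset.Icc 1 i).filter (fun j => N < π j),
              (fun l => y' l - y l) (π j) := by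
        rw [← Finset.sum_neg_distrib]
        apply Finset.sum_congr rfl
        intro j hj
        simp only [Finset.mem_filter, Finset.mem_Icc] at hj
        have hr := hπrange j hj.1.1 (by omega)
        have hmem : π j - N ∈ Finset.Icc 1 N := Finset.mem_Icc.mpr ⟨by omega, by omega⟩
        have heq : π j - N + N = π j := by omega
        have h1 := hyc (π j - N) hmem
        have h2 := hyc' (π j - N) hmem
        rw [heq] at h1 h2
        simp only
        rw [h1, h2]
        ring
      rw [e3]
      have e4 : Ssum π y' i - Ssum π y i
          = ∑ j ∈ Finset.Icc 1 i, ((fun l => y' l - y l) (π j)) := by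
        simp only [Ssum]
        rw [Finset.sum_sub_distrib]
      rw [e4, ← Finset.sum_filter_add_sum_filter_not (Finset.Icc 1 i)
        (fun j => π j ≤ N) (fun j => (fun l => y' l - y l) (π j))]
      have e5 : (Finset.Icc 1 i).filter (fun j => ¬ π j ≤ N)
          = (Finset.Icc 1 i).filter (fun j => N < π j) := by
        apply Finset.filter_congr
        intro j _
        simp [not_le]
      rw [e5]
      ring
    · rw [if_neg hS]
      apply Finset.sum_eq_zero
      intro l hl
      rw [if_neg (fun hcontra => hS hcontra.2.1), zero_mul]
  -- per-term concavity bound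
  have hstep1 : gain N k c π y' ≤ gain N k c π y +
      ∑ i ∈ Finset.Icc 1 (Kmin N k π - 1), alpha c π i *
        (if Ssum π y i ≤ (k : ℝ) then Ssum π y' i - Ssum π y i else 0) := by
    rw [gain_eq, gain_eq, ← Finset.sum_add_distrib]
    apply Finset.sum_le_sum
    intro i hi
    rw [Finset.mem_Icc] at hi
    have hα : 0 ≤ alpha c π i := by
      have := hmono i hi.1 (by omega)
      simp only [alpha]
      linarith
    have key : min ((k : ℝ) - sigma N π i) (Ssum π y' i - sigma N π i)
        ≤ min ((k : ℝ) - sigma N π i) (Ssum π y i - sigma N π i)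
          + (if Ssum π y i ≤ (k : ℝ) then Ssum π y' i - Ssum π y i else 0) := by
      by_cases hS : Ssum π y i ≤ (k : ℝ)
      · rw [if_pos hS]
        have h1 : min ((k : ℝ) - sigma N π i) (Ssum π y i - sigma N π i)
            = Ssum π y i - sigma N π i := min_eq_right (by linarith)
        have h2 := min_le_right ((k : ℝ) - sigma N π i) (Ssum π y' i - sigma N π i)
        rw [h1]
        linarith
      · push_neg at hS
        rw [if_neg (not_le.mpr hS), add_zero]
        have h1 : min ((k : ℝ) - sigma N π i) (Ssum π y i - sigma N π i)
            = (k : ℝ) - sigma N π i := min_eq_left (by linarith)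
        rw [h1]
        exact min_le_left _ _
    calc alpha c π i * min ((k : ℝ) - sigma N π i) (Ssum π y' i - sigma N π i)
        ≤ alpha c π i * (min ((k : ℝ) - sigma N π i) (Ssum π y i - sigma N π i)
            + (if Ssum π y i ≤ (k : ℝ) then Ssum π y' i - Ssum π y i else 0)) :=
          mul_le_mul_of_nonneg_left key hα
      _ = alpha c π i * min ((k : ℝ) - sigma N π i) (Ssum π y i - sigma N π i)
            + alpha c π i *
              (if Ssum π y i ≤ (k : ℝ) then Ssum π y' i - Ssum π y i else 0) := by ring
  -- assemble
  refine le_trans hstep1 ?_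
  have hfinal : ∑ i ∈ Finset.Icc 1 (Kmin N k π - 1), alpha c π i *
      (if Ssum π y i ≤ (k : ℝ) then Ssum π y' i - Ssum π y i else 0)
      = ∑ l ∈ Finset.Icc 1 N, superg N k c π y lstar l * (y' l - y l) := by
    have swap : ∑ l ∈ Finset.Icc 1 N, superg N k c π y lstar l * (y' l - y l)
        = ∑ l ∈ Finset.Icc 1 N, ∑ i ∈ Finset.Icc 1 (Kmin N k π - 1),
            alpha c π i *
            (if lstar l ≤ i ∧ Ssum π y i ≤ (k : ℝ) ∧ i < lstar (l + N) then (1 : ℝ) else 0)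
            * (y' l - y l) := by
      apply Finset.sum_congr rfl
      intro l hl
      rw [Finset.mem_Icc] at hl
      rw [← hD l hl.1 hl.2, Finset.sum_mul]
    rw [swap, Finset.sum_comm]
    apply Finset.sum_congr rfl
    intro i hi
    rw [← hC i hi, Finset.mul_sum]
    apply Finset.sum_congr rfl
    intro l _
    ring
  rw [hfinal]


end ACAI
end

section
/- Let x be an integral cache state and let x₀ ∈ {0,1}^{2N} be the empty-cache allocation defined by (x₀)_i = 0 for i ∈ {1,…,N} and (x₀)_i = 1 for i ∈ {N+1,…,2N}. Then the caching gain, defined as the cost reduction C(x₀) − C(x), has the closed form C(x₀) − C(x) = ∑_{i=1}^{K−1} α_i · min{ k − σ_i, (∑_{j=1}^{i} x_{π_j}) − σ_i }. -/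
namespace ACAI

/-- The service cost
`C(x) = ∑_{i=1}^{2N} c (π i) · x_{π i} · 𝟙{∑_{j=1}^{i-1} x_{π j} < k}`. -/
noncomputable def cost (N k : ℕ) (c : ℕ → ℝ) (π : ℕ → ℕ) (x : ℕ → ℝ) : ℝ :=
  ∑ i ∈ Finset.Icc 1 (2 * N),
    c (π i) * x (π i) *
      (if (∑ j ∈ Finset.Icc 1 (i - 1), x (π j)) < (k : ℝ) then 1 else 0)

/-- The empty-cache allocation: `x₀ i = 0` for `i ∈ {1,…,N}` and `x₀ i = 1` for
`i ∈ {N+1,…,2N}`. -/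
def emptyCache (N : ℕ) : ℕ → ℝ := fun i => if i ≤ N then 0 else 1


section Helpers

lemma sum01_exists (s : Finset ℕ) (f : ℕ → ℝ) (hf : ∀ j ∈ s, f j = 0 ∨ f j = 1) :
    ∃ m : ℕ, ∑ j ∈ s, f j = (m : ℝ) := by
  classical
  induction s using Finset.cons_induction with
  | empty => exact ⟨0, by simp⟩
  | cons a s ha ih =>
    obtain ⟨m, hm⟩ := ih (fun j hj => hf j (Finset.mem_cons_of_mem hj))
    rcases hf a (Finset.mem_cons_self a s) with h | h
    · exact ⟨m, by rw [Finset.sum_cons, h, hm]; ring⟩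
    · exact ⟨m + 1, by rw [Finset.sum_cons, h, hm]; push_cast; ring⟩

lemma key_step (k : ℕ) (c0 a : ℝ) (m : ℕ) (ha : a = 0 ∨ a = 1) :
    c0 * a * (if ((m : ℝ)) < (k : ℝ) then (1 : ℝ) else 0) =
      c0 * (min (k : ℝ) ((m : ℝ) + a) - min (k : ℝ) (m : ℝ)) := by
  rcases ha with rfl | rfl
  · simp
  · by_cases h : (m : ℝ) < (k : ℝ)
    · have hmk : m < k := by exact_mod_cast h
      have h1 : (m : ℝ) + 1 ≤ (k : ℝ) := by exact_mod_cast hmk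
      rw [if_pos h, min_eq_right h1, min_eq_right h.le]; ring
    · push_neg at h
      rw [if_neg (not_lt.mpr h), min_eq_left (by linarith), min_eq_left h]; ring

lemma abel (f g : ℕ → ℝ) (h0 : g 0 = 0) (M : ℕ) :
    ∑ i ∈ Finset.Icc 1 (M + 1), f i * (g i - g (i - 1)) =
      f (M + 1) * g (M + 1) - ∑ i ∈ Finset.Icc 1 M, (f (i + 1) - f i) * g i := by
  induction M with
  | zero => simp [h0]
  | succ M ih =>
    rw [Finset.sum_Icc_succ_top (by omega : 1 ≤ M + 1 + 1), ih,
      Finset.sum_Icc_succ_top (by omega : 1 ≤ M + 1)]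
    simp only [Nat.add_sub_cancel]
    ring

lemma sigma_zero (N : ℕ) (π : ℕ → ℕ) : sigma N π 0 = 0 := by simp [sigma]

lemma sigma_mono (N : ℕ) (π : ℕ → ℕ) {i j : ℕ} (h : i ≤ j) : sigma N π i ≤ sigma N π j :=
  Finset.card_le_card (Finset.filter_subset_filter _ (Finset.Icc_subset_Icc_right h))

lemma sigma_step (N : ℕ) (π : ℕ → ℕ) (i : ℕ) : sigma N π (i + 1) ≤ sigma N π i + 1 := by
  unfold sigma
  have h : Finset.Icc 1 (i + 1) = insert (i + 1) (Finset.Icc 1 i) := by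
    ext m; simp only [Finset.mem_Icc, Finset.mem_insert]; omega
  rw [h, Finset.filter_insert]
  split
  · exact Finset.card_insert_le _ _
  · exact Nat.le_succ _

lemma exists_eq_of_step (f : ℕ → ℕ) (h0 : f 0 = 0) (hstep : ∀ i, f (i + 1) ≤ f i + 1)
    (k M : ℕ) (hM : k ≤ f M) : ∃ i, i ≤ M ∧ f i = k := by
  induction M with
  | zero => exact ⟨0, le_refl 0, by omega⟩
  | succ M ih =>
    by_cases hc : k ≤ f M
    · obtain ⟨i, hi, he⟩ := ih hc
      exact ⟨i, by omega, he⟩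
    · exact ⟨M + 1, le_refl _, by have := hstep M; omega⟩

lemma sum_perm (N : ℕ) (π : ℕ → ℕ)
    (hbij : Set.BijOn π (Set.Icc 1 (2 * N)) (Set.Icc 1 (2 * N))) (z : ℕ → ℝ) :
    ∑ j ∈ Finset.Icc 1 (2 * N), z (π j) = ∑ m ∈ Finset.Icc 1 (2 * N), z m := by
  refine Finset.sum_nbij π ?_ ?_ ?_ (fun a _ => rfl)
  · intro a ha
    have := hbij.mapsTo (show a ∈ Set.Icc 1 (2 * N) by
      simpa [Set.mem_Icc] using Finset.mem_Icc.mp ha)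
    exact Finset.mem_Icc.mpr (by simpa [Set.mem_Icc] using this)
  · rw [Finset.coe_Icc]; exact hbij.injOn
  · rw [Finset.coe_Icc]; exact hbij.surjOn

lemma sum_total (N : ℕ) (π : ℕ → ℕ)
    (hbij : Set.BijOn π (Set.Icc 1 (2 * N)) (Set.Icc 1 (2 * N))) (z : ℕ → ℝ)
    (hcomp : ∀ m ∈ Finset.Icc 1 N, z (m + N) = 1 - z m) :
    ∑ j ∈ Finset.Icc 1 (2 * N), z (π j) = (N : ℝ) := by
  rw [sum_perm N π hbij z]
  have hs : Finset.Icc 1 (2 * N) = Finset.Ioc 0 (2 * N) := by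
    ext m; simp only [Finset.mem_Icc, Finset.mem_Ioc]; omega
  rw [hs, ← Finset.sum_Ioc_consecutive z (Nat.zero_le N) (by omega : N ≤ 2 * N)]
  have h2 : ∑ m ∈ Finset.Ioc N (2 * N), z m = ∑ m ∈ Finset.Ioc 0 N, z (m + N) := by
    refine (Finset.sum_nbij (fun m => m + N) ?_ ?_ ?_ (fun a _ => rfl)).symm
    · intro a ha
      simp only [Finset.mem_Ioc] at ha ⊢; omega
    · intro a _ b _ hab
      have : a + N = b + N := hab
      omega
    · intro b hb
      simp only [Finset.coe_Ioc, Set.mem_Ioc, Set.mem_image] at hb ⊢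
      refine ⟨b - N, by omega, ?_⟩
      show b - N + N = b
      omega
  rw [h2, ← Finset.sum_add_distrib]
  have h3 : ∀ m ∈ Finset.Ioc 0 N, z m + z (m + N) = 1 := by
    intro m hm
    rw [hcomp m (Finset.mem_Icc.mpr (by obtain ⟨h1, h2⟩ := Finset.mem_Ioc.mp hm; exact ⟨h1, h2⟩))]; ring
  rw [Finset.sum_congr rfl h3]
  simp

lemma sum_empty_eq_sigma (N : ℕ) (π : ℕ → ℕ) (i : ℕ) :
    ∑ j ∈ Finset.Icc 1 i, emptyCache N (π j) = (sigma N π i : ℝ) := by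
  rw [sigma, Finset.card_filter, Nat.cast_sum]
  refine Finset.sum_congr rfl fun j _ => ?_
  by_cases h : N < π j
  · rw [if_pos h, show emptyCache N (π j) = 1 from if_neg (by omega)]; norm_num
  · rw [if_neg h, show emptyCache N (π j) = 0 from if_pos (by omega)]; norm_num

lemma cost_eq (N k : ℕ) (c : ℕ → ℝ) (π : ℕ → ℕ) (z : ℕ → ℝ)
    (hz : ∀ j ∈ Finset.Icc 1 (2 * N), z (π j) = 0 ∨ z (π j) = 1) :
    cost N k c π z = ∑ i ∈ Finset.Icc 1 (2 * N),
      c (π i) * (min (k : ℝ) (∑ j ∈ Finset.Icc 1 i, z (π j))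
               - min (k : ℝ) (∑ j ∈ Finset.Icc 1 (i - 1), z (π j))) := by
  unfold cost
  refine Finset.sum_congr rfl fun i hi => ?_
  rw [Finset.mem_Icc] at hi
  obtain ⟨p, rfl⟩ : ∃ p, i = p + 1 := ⟨i - 1, by omega⟩
  simp only [Nat.add_sub_cancel]
  rw [Finset.sum_Icc_succ_top (by omega : 1 ≤ p + 1)]
  obtain ⟨m, hm⟩ := sum01_exists (Finset.Icc 1 p) (fun j => z (π j))
    (fun j hj => hz j (Finset.mem_Icc.mpr (by rw [Finset.mem_Icc] at hj; omega)))
  rw [hm]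
  exact key_step k (c (π (p + 1))) (z (π (p + 1))) m
    (hz (p + 1) (Finset.mem_Icc.mpr (by omega)))

lemma sum01_eq_card (s : Finset ℕ) (f : ℕ → ℝ) [DecidablePred fun j => f j = 1]
    (hf : ∀ j ∈ s, f j = 0 ∨ f j = 1) :
    ∑ j ∈ s, f j = ((s.filter (fun j => f j = 1)).card : ℝ) := by
  rw [Finset.card_filter, Nat.cast_sum]
  refine Finset.sum_congr rfl fun j hj => ?_
  rcases hf j hj with h | h <;> simp [h]

lemma sigma_le_sum (N : ℕ) (π : ℕ → ℕ)
    (hbij : Set.BijOn π (Set.Icc 1 (2 * N)) (Set.Icc 1 (2 * N)))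
    (hord : ∀ j l, j ∈ Set.Icc 1 (2 * N) → l ∈ Set.Icc 1 (2 * N) →
      π j ≤ N → π l = π j + N → j < l)
    (x : ℕ → ℝ) (hx01 : ∀ m ∈ Finset.Icc 1 (2 * N), x m = 0 ∨ x m = 1)
    (hcomp : ∀ m ∈ Finset.Icc 1 N, x (m + N) = 1 - x m)
    (i : ℕ) (hi : i ≤ 2 * N) :
    (sigma N π i : ℝ) ≤ ∑ j ∈ Finset.Icc 1 i, x (π j) := by
  classical
  have hmemS : ∀ j, j ∈ Finset.Icc 1 i → π j ∈ Set.Icc 1 (2 * N) := by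
    intro j hj
    rw [Finset.mem_Icc] at hj
    exact hbij.mapsTo (Set.mem_Icc.mpr ⟨by omega, by omega⟩)
  rw [sum01_eq_card (Finset.Icc 1 i) (fun j => x (π j))
    (fun j hj => hx01 (π j) (by
      have := hmemS j hj; rw [Set.mem_Icc] at this
      exact Finset.mem_Icc.mpr this))]
  rw [sigma, Nat.cast_le]
  set inv : ℕ → ℕ := Function.invFunOn π (Set.Icc 1 (2 * N)) with hinv
  have hπinv : ∀ m ∈ Set.Icc 1 (2 * N), π (inv m) = m ∧ inv m ∈ Set.Icc 1 (2 * N) := by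
    intro m hm
    have hex : ∃ a ∈ Set.Icc 1 (2 * N), π a = m := hbij.surjOn hm
    exact ⟨Function.invFunOn_eq hex, Function.invFunOn_mem hex⟩
  set F : ℕ → ℕ := fun j => if x (π j) = 1 then j else inv (π j - N) with hF
  have key : ∀ j ∈ (Finset.Icc 1 i).filter (fun j => N < π j),
      (x (π j) ≠ 1 → (inv (π j - N) < j ∧ π (inv (π j - N)) = π j - N ∧
        1 ≤ inv (π j - N) ∧ x (π (inv (π j - N))) = 1)) := by
    intro j hj hne
    rw [Finset.mem_filter, Finset.mem_Icc] at hj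
    obtain ⟨⟨hj1, hj2⟩, hjN⟩ := hj
    have hjS : j ∈ Set.Icc 1 (2 * N) := Set.mem_Icc.mpr ⟨hj1, by omega⟩
    have hπj : π j ∈ Set.Icc 1 (2 * N) := hbij.mapsTo hjS
    rw [Set.mem_Icc] at hπj
    set m := π j - N with hm
    have hm1 : 1 ≤ m := by omega
    have hmN : m ≤ N := by omega
    have hmS : m ∈ Set.Icc 1 (2 * N) := Set.mem_Icc.mpr ⟨hm1, by omega⟩
    obtain ⟨hπl, hlS⟩ := hπinv m hmS
    have hx0 : x (π j) = 0 := by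
      rcases hx01 (π j) (Finset.mem_Icc.mpr ⟨by omega, by omega⟩) with h | h
      · exact h
      · exact absurd h hne
    have hxm : x m = 1 := by
      have := hcomp m (Finset.mem_Icc.mpr ⟨hm1, hmN⟩)
      have hmn : m + N = π j := by omega
      rw [hmn, hx0] at this
      linarith
    have hlt : inv m < j := hord (inv m) j hlS hjS (by omega) (by omega)
    rw [Set.mem_Icc] at hlS
    exact ⟨hlt, hπl, hlS.1, by rw [hπl]; exact hxm⟩
  refine Finset.card_le_card_of_injOn F ?_ ?_
  · intro j hj
    have hjf := hj
    rw [Finset.mem_coe, Finset.mem_filter, Finset.mem_Icc] at hjf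
    obtain ⟨⟨hj1, hj2⟩, hjN⟩ := hjf
    by_cases hxj : x (π j) = 1
    · have hFj : F j = j := by rw [hF]; simp only [if_pos hxj]
      rw [hFj, Finset.mem_coe, Finset.mem_filter, Finset.mem_Icc]
      exact ⟨⟨hj1, hj2⟩, hxj⟩
    · obtain ⟨hlt, hπl, hl1, hxl⟩ := key j hj hxj
      have hFj : F j = inv (π j - N) := by rw [hF]; simp only [if_neg hxj]
      rw [hFj, Finset.mem_coe, Finset.mem_filter, Finset.mem_Icc]
      exact ⟨⟨hl1, by omega⟩, hxl⟩
  · intro j1 hj1 j2 hj2 heq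
    simp only [Finset.coe_filter, Set.mem_setOf_eq, Finset.mem_Icc] at hj1 hj2
    obtain ⟨⟨hj11, hj12⟩, hj1N⟩ := hj1
    obtain ⟨⟨hj21, hj22⟩, hj2N⟩ := hj2
    have hj1m : j1 ∈ (Finset.Icc 1 i).filter (fun j => N < π j) := by
      rw [Finset.mem_filter, Finset.mem_Icc]; exact ⟨⟨hj11, hj12⟩, hj1N⟩
    have hj2m : j2 ∈ (Finset.Icc 1 i).filter (fun j => N < π j) := by
      rw [Finset.mem_filter, Finset.mem_Icc]; exact ⟨⟨hj21, hj22⟩, hj2N⟩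
    have hinj := hbij.injOn
    have hj1S : j1 ∈ Set.Icc 1 (2 * N) := Set.mem_Icc.mpr ⟨hj11, by omega⟩
    have hj2S : j2 ∈ Set.Icc 1 (2 * N) := Set.mem_Icc.mpr ⟨hj21, by omega⟩
    rw [hF] at heq
    by_cases h1 : x (π j1) = 1 <;> by_cases h2 : x (π j2) = 1
    · simpa [if_pos h1, if_pos h2] using heq
    · obtain ⟨_, hπl, _, _⟩ := key j2 hj2m h2
      simp only [if_pos h1, if_neg h2] at heq
      rw [heq] at hj1N
      have hb := hbij.mapsTo hj2S
      rw [Set.mem_Icc] at hb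
      omega
    · obtain ⟨_, hπl, _, _⟩ := key j1 hj1m h1
      simp only [if_neg h1, if_pos h2] at heq
      rw [← heq] at hj2N
      have hb := hbij.mapsTo hj1S
      rw [Set.mem_Icc] at hb
      omega
    · obtain ⟨_, hπl1, _, _⟩ := key j1 hj1m h1
      obtain ⟨_, hπl2, _, _⟩ := key j2 hj2m h2
      simp only [if_neg h1, if_neg h2] at heq
      have hd : π j1 - N = π j2 - N := by rw [← hπl1, ← hπl2, heq]
      have hππ : π j1 = π j2 := by omega
      exact hinj hj1S hj2S hππ

end Helpers

/-- **Closed form of the caching gain (Lemma 2).**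
For every integral cache state `x`, the cost reduction with respect to the empty cache
has the closed form
`C(x₀) - C(x) = ∑_{i=1}^{K-1} α_i · min { k - σ_i, (∑_{j=1}^{i} x_{π j}) - σ_i }`. -/
theorem gain_closed_form
    (N k h : ℕ) (hN : 0 < N) (hk : 0 < k) (hkh : k ≤ h) (hhN : h ≤ N)
    (cf : ℝ) (hcf : 0 < cf) (c : ℕ → ℝ) (π : ℕ → ℕ)
    (hreq : Request N cf c π)
    (x : ℕ → ℝ) (hx : IsInt N h x) :
    cost N k c π (emptyCache N) - cost N k c π x =
      ∑ i ∈ Finset.Icc 1 (Kmin N k π - 1),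
        alpha c π i *
          min ((k : ℝ) - sigma N π i)
            ((∑ j ∈ Finset.Icc 1 i, x (π j)) - sigma N π i) := by
  classical
  obtain ⟨hc0, hcplus, hbij, hsort, hord⟩ := hreq
  obtain ⟨⟨hxmem, hxsum, hxcomp⟩, hx01⟩ := hx
  have hmem : ∀ j ∈ Finset.Icc 1 (2 * N), π j ∈ Finset.Icc 1 (2 * N) := by
    intro j hj
    rw [Finset.mem_Icc] at hj
    have := hbij.mapsTo (Set.mem_Icc.mpr ⟨hj.1, hj.2⟩)
    rw [Set.mem_Icc] at this
    exact Finset.mem_Icc.mpr this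
  have hx01' : ∀ j ∈ Finset.Icc 1 (2 * N), x (π j) = 0 ∨ x (π j) = 1 :=
    fun j hj => hx01 (π j) (hmem j hj)
  have hx001 : ∀ j ∈ Finset.Icc 1 (2 * N),
      emptyCache N (π j) = 0 ∨ emptyCache N (π j) = 1 := by
    intro j _
    unfold emptyCache
    split
    · exact Or.inl rfl
    · exact Or.inr rfl
  have hx0comp : ∀ m ∈ Finset.Icc 1 N, emptyCache N (m + N) = 1 - emptyCache N m := by
    intro m hm
    rw [Finset.mem_Icc] at hm
    unfold emptyCache
    rw [if_neg (by omega), if_pos (by omega)]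
    norm_num
  -- abbreviations
  set S : ℕ → ℝ := fun i => ∑ j ∈ Finset.Icc 1 i, x (π j) with hSdef
  set G : ℕ → ℝ := fun i => min (k : ℝ) (∑ j ∈ Finset.Icc 1 i, emptyCache N (π j))
      - min (k : ℝ) (S i) with hGdef
  -- Step A: costs as telescoping sums
  have hcx := cost_eq N k c π x hx01'
  have hcx0 := cost_eq N k c π (emptyCache N) hx001
  have hdiff : cost N k c π (emptyCache N) - cost N k c π x =
      ∑ i ∈ Finset.Icc 1 (2 * N), c (π i) * (G i - G (i - 1)) := by
    rw [hcx, hcx0, ← Finset.sum_sub_distrib]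
    refine Finset.sum_congr rfl fun i _ => ?_
    rw [hGdef]
    ring
  -- Step B: Abel summation
  have hG0 : G 0 = 0 := by
    rw [hGdef]
    simp [hSdef]
  have hGM : G (2 * N) = 0 := by
    rw [hGdef]
    simp only [hSdef]
    rw [sum_total N π hbij x hxcomp, sum_total N π hbij (emptyCache N) hx0comp]
    ring
  have h2N : 2 * N = (2 * N - 1) + 1 := by omega
  have habel := abel (fun i => c (π i)) G hG0 (2 * N - 1)
  rw [← h2N] at habel
  rw [hdiff, habel, hGM, mul_zero, zero_sub, ← Finset.sum_neg_distrib]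
  -- Now: -∑ (c(π(i+1)) - c(π i)) * G i = target
  -- K facts
  have hσtot : sigma N π (2 * N) = N := by
    have h1 := sum_empty_eq_sigma N π (2 * N)
    have h2 := sum_total N π hbij (emptyCache N) hx0comp
    rw [h1] at h2
    exact_mod_cast h2
  have hne : ∃ i, i ≤ 2 * N ∧ sigma N π i = k :=
    exists_eq_of_step (sigma N π) (sigma_zero N π) (sigma_step N π) k (2 * N)
      (by rw [hσtot]; omega)
  obtain ⟨i0, hi0le, hi0eq⟩ := hne
  have hKmem : sigma N π (Kmin N k π) = k := by
    have h1 : Kmin N k π ∈ {i | sigma N π i = k} :=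
      Nat.sInf_mem (⟨i0, show i0 ∈ {i | sigma N π i = k} from hi0eq⟩ :
        Set.Nonempty {i | sigma N π i = k})
    exact h1
  have hKle : Kmin N k π ≤ 2 * N :=
    le_trans (Nat.sInf_le (show i0 ∈ {i | sigma N π i = k} from hi0eq)) hi0le
  have hK1 : 1 ≤ Kmin N k π := by
    rcases Nat.eq_zero_or_pos (Kmin N k π) with h0 | h0
    · rw [h0, sigma_zero] at hKmem; omega
    · omega
  have hlt : ∀ i, i < Kmin N k π → sigma N π i < k := by
    intro i hi
    by_contra hge
    push_neg at hge
    obtain ⟨i', hi'le, hi'eq⟩ :=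
      exists_eq_of_step (sigma N π) (sigma_zero N π) (sigma_step N π) k i hge
    have h2 : Kmin N k π ≤ i' :=
      Nat.sInf_le (show i' ∈ {i | sigma N π i = k} from hi'eq)
    omega
  -- Step C: split the sum
  have hIoc : ∀ n : ℕ, Finset.Icc 1 n = Finset.Ioc 0 n := by
    intro n; ext m; simp only [Finset.mem_Icc, Finset.mem_Ioc]; omega
  rw [hIoc (2 * N - 1),
    ← Finset.sum_Ioc_consecutive (fun i => -((c (π (i + 1)) - c (π i)) * G i))
      (Nat.zero_le (Kmin N k π - 1)) (by omega : Kmin N k π - 1 ≤ 2 * N - 1)]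
  have htail : ∑ i ∈ Finset.Ioc (Kmin N k π - 1) (2 * N - 1),
      -((c (π (i + 1)) - c (π i)) * G i) = 0 := by
    refine Finset.sum_eq_zero fun i hi => ?_
    rw [Finset.mem_Ioc] at hi
    have hKi : Kmin N k π ≤ i := by omega
    have hi2N : i ≤ 2 * N := by omega
    have hσk : k ≤ sigma N π i := hKmem ▸ sigma_mono N π hKi
    have hσkR : (k : ℝ) ≤ (sigma N π i : ℝ) := by exact_mod_cast hσk
    have hSk : (k : ℝ) ≤ S i :=
      le_trans hσkR (sigma_le_sum N π hbij hord x hx01 hxcomp i hi2N)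
    have hGi : G i = 0 := by
      rw [hGdef]
      simp only
      rw [sum_empty_eq_sigma N π i, min_eq_left hσkR, min_eq_left hSk]
      ring
    rw [hGi, mul_zero, neg_zero]
  rw [htail, add_zero, ← hIoc (Kmin N k π - 1)]
  refine Finset.sum_congr rfl fun i hi => ?_
  rw [Finset.mem_Icc] at hi
  have hiK : i < Kmin N k π := by omega
  have hσlt : sigma N π i < k := hlt i hiK
  have hσle : (sigma N π i : ℝ) ≤ (k : ℝ) := by exact_mod_cast hσlt.le
  have hGi : G i = (sigma N π i : ℝ) - min (k : ℝ) (S i) := by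
    rw [hGdef]
    simp only
    rw [sum_empty_eq_sigma N π i, min_eq_right hσle]
  
  rw [hGi]
  simp only [alpha, hSdef]
  rw [min_sub_sub_right]
  ring


end ACAI
end
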